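/- The coefficient b_s(μ,ν) appearing in the Schur function identity admits two equal expressions: h((n^m)) / [h(μ) h(ν + (s^n)) h((μ + (s^m) + (n^m)) ∪ ν')] = 1/[h(μ) h(ν) h(μ+(s^m)) h(ν+(s^n))] · ∏_{i=1}^m ∏_{j=1}^n (m+n−i−j+1)/(μ_i + ν_j + m+n−i−j+s+1), for partitions μ of length ≤ m, ν of length ≤ n, and a nonnegative integer s. In particular this expression is symmetric under swapping (μ, m) with (ν, n). -/

import Mathlib

open Finset

/-- The product of the hook lengths of a partition with at most `n` parts,
given by the (weakly decreasing) row-length function `l`. -/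
def hookProd (n : ℕ) (l : ℕ → ℕ) : ℕ :=
  ∏ i ∈ Finset.range n, ∏ j ∈ Finset.range (l i),
    (l i - j + ((Finset.Ico (i + 1) n).filter (fun i' => j < l i')).card)

/-- The conjugate (transpose) of a partition of length at most `L`. -/
def conjPart (L : ℕ) (l : ℕ → ℕ) (j : ℕ) : ℕ :=
  ((Finset.range L).filter (fun i => j < l i)).card

lemma conj_lt_iff {n : ℕ} {ν : ℕ → ℕ} (hν : Antitone ν) (hνlen : ∀ i, n ≤ i → ν i = 0)
    (j k : ℕ) : j < conjPart n ν k ↔ k < ν j := by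
  unfold conjPart
  constructor
  · intro h
    by_contra hk
    push_neg at hk
    have hsub : (range n).filter (fun i => k < ν i) ⊆ range j := by
      intro i hi
      simp only [mem_filter, mem_range] at hi ⊢
      by_contra hij
      push_neg at hij
      have := hν hij
      omega
    have := card_le_card hsub
    simp only [card_range] at this
    omega
  · intro h
    have hjn : j < n := by
      by_contra hj; push_neg at hj; rw [hνlen j hj] at h; omega
    have hsub : range (j+1) ⊆ (range n).filter (fun i => k < ν i) := by
      intro i hi
      simp only [mem_range] at hi
      simp only [mem_filter, mem_range]
      have : ν j ≤ ν i := hν (by omega)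
      exact ⟨by omega, by omega⟩
    have := card_le_card hsub
    simp only [card_range] at this
    omega

lemma conj_antitone {n : ℕ} (ν : ℕ → ℕ) : Antitone (conjPart n ν) := by
  intro a b hab
  apply card_le_card
  intro i hi
  simp only [mem_filter] at hi ⊢
  exact ⟨hi.1, by omega⟩

lemma conj_len {n : ℕ} {ν : ℕ → ℕ} (hν : Antitone ν) :
    ∀ k, ν 0 ≤ k → conjPart n ν k = 0 := by
  intro k hk
  unfold conjPart
  rw [card_eq_zero, filter_eq_empty_iff]
  intro i _
  have := hν (Nat.zero_le i)
  omega

lemma conj_conj {n : ℕ} {ν : ℕ → ℕ} (hν : Antitone ν) (hνlen : ∀ i, n ≤ i → ν i = 0)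
    (j : ℕ) : conjPart (ν 0) (conjPart n ν) j = ν j := by
  have key : ∀ t, t < conjPart (ν 0) (conjPart n ν) j ↔ t < ν j := by
    intro t
    rw [conj_lt_iff (conj_antitone ν) (conj_len hν) t j, conj_lt_iff hν hνlen j t]
  by_contra h
  rcases Nat.lt_or_ge (conjPart (ν 0) (conjPart n ν) j) (ν j) with h' | h'
  · have := (key _).mpr h'; omega
  · have : ν j < conjPart (ν 0) (conjPart n ν) j := by omega
    have := (key _).mp this; omega
open Finset

-- card of filter on Ico (i+1) n when all of range (i+1) satisfies the predicate
lemma card_leg {n : ℕ} {ν : ℕ → ℕ} (hν : Antitone ν) {i j : ℕ} (hi : i < n) (hj : j < ν i) :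
    ((Finset.Ico (i + 1) n).filter (fun i' => j < ν i')).card = conjPart n ν j - (i + 1) := by
  have hsplit : (range n) = range (i+1) ∪ Finset.Ico (i+1) n := by
    ext x; simp only [mem_range, mem_union, mem_Ico]; omega
  have hdisj : Disjoint ((range (i+1)).filter (fun i' => j < ν i'))
      ((Finset.Ico (i+1) n).filter (fun i' => j < ν i')) := by
    rw [Finset.disjoint_left]
    intro a ha hb
    simp only [mem_filter, mem_range, mem_Ico] at ha hb
    omega
  have hfull : (range (i+1)).filter (fun i' => j < ν i') = range (i+1) := by
    rw [filter_eq_self]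
    intro i' hi'
    simp only [mem_range] at hi'
    have : ν i ≤ ν i' := hν (by omega)
    omega
  have : conjPart n ν j = (i+1) + ((Finset.Ico (i+1) n).filter (fun i' => j < ν i')).card := by
    unfold conjPart
    rw [hsplit, filter_union, card_union_of_disjoint hdisj, hfull, card_range]
  omega

lemma card_arm {a b c : ℕ} (hc : c ≤ b) :
    ((Finset.Ico a b).filter (fun j' => j' < c)).card = c - a := by
  have : (Finset.Ico a b).filter (fun j' => j' < c) = Finset.Ico a c := by
    ext x; simp only [mem_filter, mem_Ico]; omega
  rw [this, Nat.card_Ico]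

lemma hookProd_conj {n : ℕ} {ν : ℕ → ℕ} (hν : Antitone ν) (hνlen : ∀ i, n ≤ i → ν i = 0) :
    hookProd n ν = hookProd (ν 0) (conjPart n ν) := by
  unfold hookProd
  rw [Finset.prod_sigma', Finset.prod_sigma']
  apply Finset.prod_nbij' (fun p => ⟨p.2, p.1⟩) (fun p => ⟨p.2, p.1⟩)
  · rintro ⟨i, j⟩ hp
    simp only [Finset.mem_sigma, mem_range] at hp ⊢
    obtain ⟨hi, hj⟩ := hp
    constructor
    · have := hν (Nat.zero_le i); omega
    · rw [conj_lt_iff hν hνlen]; exact hj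
  · rintro ⟨j, i⟩ hp
    simp only [Finset.mem_sigma, mem_range] at hp ⊢
    obtain ⟨hj, hi⟩ := hp
    rw [conj_lt_iff hν hνlen] at hi
    constructor
    · by_contra h; push_neg at h; rw [hνlen i h] at hi; omega
    · exact hi
  · rintro ⟨i, j⟩ _; rfl
  · rintro ⟨j, i⟩ _; rfl
  · rintro ⟨i, j⟩ hp
    obtain ⟨hi, hj⟩ : i < n ∧ j < ν i := by simpa using hp
    dsimp only
    have h1 : ((Finset.Ico (i + 1) n).filter (fun i' => j < ν i')).card
        = conjPart n ν j - (i + 1) := card_leg hν hi hj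
    have h2 : ((Finset.Ico (j + 1) (ν 0)).filter (fun j' => i < conjPart n ν j')).card
        = ν i - (j + 1) := by
      have hcong : (Finset.Ico (j + 1) (ν 0)).filter (fun j' => i < conjPart n ν j')
          = (Finset.Ico (j + 1) (ν 0)).filter (fun j' => j' < ν i) := by
        apply filter_congr
        intro j' _
        exact conj_lt_iff hν hνlen i j'
      rw [hcong, card_arm (hν (Nat.zero_le i))]
    rw [h1, h2]
    have hc : i + 1 ≤ conjPart n ν j := by rw [Nat.succ_le_iff, conj_lt_iff hν hνlen]; exact hj
    omega

lemma hookProd_pos (n : ℕ) (l : ℕ → ℕ) : 0 < hookProd n l := by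
  unfold hookProd
  apply Finset.prod_pos
  intro i _
  apply Finset.prod_pos
  intro j hj
  simp only [mem_range] at hj
  omega

lemma card_filter_Ico_shift (m a b : ℕ) (p : ℕ → Prop) [DecidablePred p] :
    ((Finset.Ico (m + a) (m + b)).filter (fun i => p (i - m))).card
      = ((Finset.Ico a b).filter p).card := by
  apply Finset.card_bij' (fun i _ => i - m) (fun k _ => k + m)
  · intro i hi
    simp only [mem_filter, mem_Ico] at hi ⊢
    obtain ⟨⟨h1, h2⟩, h3⟩ := hi
    refine ⟨⟨by omega, by omega⟩, h3⟩
  · intro k hk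
    simp only [mem_filter, mem_Ico] at hk ⊢
    obtain ⟨⟨h1, h2⟩, h3⟩ := hk
    have : k + m - m = k := by omega
    refine ⟨⟨by omega, by omega⟩, by rw [this]; exact h3⟩
  · intro i hi
    simp only [mem_filter, mem_Ico] at hi
    omega
  · intro k _
    omega

lemma rect_hookProd (m n : ℕ) :
    hookProd m (fun i => if i < m then n else 0)
      = ∏ i ∈ Finset.range m, ∏ j ∈ Finset.range n, (n - j + (m - (i + 1))) := by
  unfold hookProd
  apply Finset.prod_congr rfl
  intro i hi
  simp only [mem_range] at hi
  simp only [if_pos hi]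
  apply Finset.prod_congr rfl
  intro j hj
  simp only [mem_range] at hj
  congr 1
  have : (Finset.Ico (i+1) m).filter (fun i' => j < if i' < m then n else 0)
      = Finset.Ico (i+1) m := by
    rw [filter_eq_self]
    intro i' hi'
    simp only [mem_Ico] at hi'
    rw [if_pos hi'.2]
    omega
  rw [this, Nat.card_Ico]

lemma lambda_hookProd (m n s : ℕ) (μ ν : ℕ → ℕ)
    (hν : Antitone ν) (hνlen : ∀ i, n ≤ i → ν i = 0) :
    hookProd (m + ν 0) (fun i => if i < m then μ i + s + n else conjPart n ν (i - m))
      = (∏ i ∈ Finset.range m, ∏ j ∈ Finset.range n,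
            (μ i + ν j + s + (n - j) + (m - (i + 1))))
        * hookProd m (fun i => if i < m then μ i + s else 0) * hookProd n ν := by
  set lam : ℕ → ℕ := fun i => if i < m then μ i + s + n else conjPart n ν (i - m) with hlam
  have hsplit : hookProd (m + ν 0) lam
      = (∏ i ∈ Finset.range m, ∏ j ∈ Finset.range (lam i),
          (lam i - j + ((Finset.Ico (i + 1) (m + ν 0)).filter (fun i' => j < lam i')).card))
        * (∏ k ∈ Finset.range (ν 0), ∏ j ∈ Finset.range (lam (m + k)),
          (lam (m + k) - j +
            ((Finset.Ico (m + k + 1) (m + ν 0)).filter (fun i' => j < lam i')).card)) := by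
    unfold hookProd
    rw [Finset.prod_range_add]
  -- Part B : the rows below are the conjugate partition, giving hookProd n ν
  have hlam_hi : ∀ k, lam (m + k) = conjPart n ν k := by
    intro k
    simp only [hlam]
    rw [if_neg (by omega)]
    congr 1
    omega
  have hB : (∏ k ∈ Finset.range (ν 0), ∏ j ∈ Finset.range (lam (m + k)),
      (lam (m + k) - j +
        ((Finset.Ico (m + k + 1) (m + ν 0)).filter (fun i' => j < lam i')).card))
      = hookProd n ν := by
    rw [hookProd_conj hν hνlen]
    unfold hookProd
    apply Finset.prod_congr rfl
    intro k hk
    rw [hlam_hi k]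
    apply Finset.prod_congr rfl
    intro j hj
    congr 1
    have h1 : (Finset.Ico (m + k + 1) (m + ν 0)).filter (fun i' => j < lam i')
        = (Finset.Ico (m + (k + 1)) (m + ν 0)).filter (fun i' => j < conjPart n ν (i' - m)) := by
      rw [show m + k + 1 = m + (k + 1) by omega]
      apply filter_congr
      intro i' hi'
      simp only [mem_Ico] at hi'
      simp only [hlam, if_neg (show ¬ i' < m by omega)]
    rw [h1]
    exact card_filter_Ico_shift m (k + 1) (ν 0) (fun x => j < conjPart n ν x)
  -- Part A : the first m rows
  have hcard2 : ∀ j, ((Finset.Ico m (m + ν 0)).filter (fun i' => j < lam i')).card = ν j := by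
    intro j
    have h1 : (Finset.Ico m (m + ν 0)).filter (fun i' => j < lam i')
        = (Finset.Ico (m + 0) (m + ν 0)).filter (fun i' => j < conjPart n ν (i' - m)) := by
      rw [show m + 0 = m by omega]
      apply filter_congr
      intro i' hi'
      simp only [mem_Ico] at hi'
      simp only [hlam, if_neg (show ¬ i' < m by omega)]
    rw [h1, card_filter_Ico_shift m 0 (ν 0) (fun x => j < conjPart n ν x)]
    have : (Finset.Ico 0 (ν 0)).filter (fun k => j < conjPart n ν k)
        = (Finset.range (ν 0)).filter (fun k => j < conjPart n ν k) := by
      rw [range_eq_Ico]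
    rw [this]
    exact conj_conj hν hνlen j
  have hcardsplit : ∀ i, i < m → ∀ j,
      ((Finset.Ico (i + 1) (m + ν 0)).filter (fun i' => j < lam i')).card
        = ((Finset.Ico (i + 1) m).filter (fun i' => j < μ i' + s + n)).card + ν j := by
    intro i hi j
    have hun : Finset.Ico (i + 1) (m + ν 0) = Finset.Ico (i + 1) m ∪ Finset.Ico m (m + ν 0) := by
      rw [Finset.Ico_union_Ico_eq_Ico (by omega) (by omega)]
    have hdisj : Disjoint ((Finset.Ico (i + 1) m).filter (fun i' => j < lam i'))
        ((Finset.Ico m (m + ν 0)).filter (fun i' => j < lam i')) := by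
      rw [Finset.disjoint_left]
      intro a ha hb
      simp only [mem_filter, mem_Ico] at ha hb
      omega
    rw [hun, filter_union, card_union_of_disjoint hdisj, hcard2]
    congr 2
    apply filter_congr
    intro i' hi'
    simp only [mem_Ico] at hi'
    simp only [hlam, if_pos hi'.2]
  have hA : (∏ i ∈ Finset.range m, ∏ j ∈ Finset.range (lam i),
      (lam i - j + ((Finset.Ico (i + 1) (m + ν 0)).filter (fun i' => j < lam i')).card))
      = (∏ i ∈ Finset.range m, ∏ j ∈ Finset.range n,
            (μ i + ν j + s + (n - j) + (m - (i + 1))))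
        * hookProd m (fun i => if i < m then μ i + s else 0) := by
    unfold hookProd
    rw [← Finset.prod_mul_distrib]
    apply Finset.prod_congr rfl
    intro i hi
    simp only [mem_range] at hi
    simp only [if_pos hi]
    have hlam_i : lam i = n + (μ i + s) := by
      simp only [hlam, if_pos hi]; omega
    rw [hlam_i, Finset.prod_range_add]
    congr 1
    · -- first n columns: cross factors
      apply Finset.prod_congr rfl
      intro j hj
      simp only [mem_range] at hj
      rw [hcardsplit i hi j]
      have hfull : (Finset.Ico (i + 1) m).filter (fun i' => j < μ i' + s + n)
          = Finset.Ico (i + 1) m := by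
        rw [filter_eq_self]
        intro i' _
        omega
      rw [hfull, Nat.card_Ico]
      omega
    · -- remaining columns: hooks of μ + (s^m)
      apply Finset.prod_congr rfl
      intro t ht
      simp only [mem_range] at ht
      rw [hcardsplit i hi (n + t), hνlen (n + t) (by omega)]
      have hc : (Finset.Ico (i + 1) m).filter (fun i' => n + t < μ i' + s + n)
          = (Finset.Ico (i + 1) m).filter (fun i' => t < if i' < m then μ i' + s else 0) := by
        apply filter_congr
        intro i' hi'
        simp only [mem_Ico] at hi'
        rw [if_pos hi'.2]
        omega
      rw [hc]
      omega
  rw [hsplit, hA, hB]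

/-- the two expressions for the coefficient `b_s(μ,ν)` agree:
`h((n^m)) / (h(μ) h(ν+(s^n)) h((μ+(s^m)+(n^m)) ∪ ν'))
 = (1/(h(μ)h(ν)h(μ+(s^m))h(ν+(s^n)))) ·
   ∏_{i=1}^m ∏_{j=1}^n (m+n-i-j+1)/(μᵢ+νⱼ+m+n-i-j+s+1)`
for partitions `μ` of length `≤ m` and `ν` of length `≤ n` and `s ∈ ℕ`
(products below are written with 0-indexed `i, j`). -/
theorem stmt11 (m n s : ℕ) (μ ν : ℕ → ℕ)
    (hμ : Antitone μ) (hμlen : ∀ i, m ≤ i → μ i = 0)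
    (hν : Antitone ν) (hνlen : ∀ i, n ≤ i → ν i = 0) :
    (hookProd m (fun i => if i < m then n else 0) : ℚ) /
        ((hookProd m μ : ℚ) *
          (hookProd n (fun i => if i < n then ν i + s else 0) : ℚ) *
          (hookProd (m + ν 0) (fun i =>
            if i < m then μ i + s + n else conjPart n ν (i - m)) : ℚ)) =
      (1 / ((hookProd m μ : ℚ) * (hookProd n ν : ℚ) *
          (hookProd m (fun i => if i < m then μ i + s else 0) : ℚ) *
          (hookProd n (fun i => if i < n then ν i + s else 0) : ℚ))) *
        ∏ i ∈ Finset.range m, ∏ j ∈ Finset.range n,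
          (((m : ℚ) + n - i - j - 1) /
            ((μ i : ℚ) + (ν j : ℚ) + s + m + n - i - j - 1)) := by
  have hq : (∏ i ∈ Finset.range m, ∏ j ∈ Finset.range n,
        (((m : ℚ) + n - i - j - 1) /
          ((μ i : ℚ) + (ν j : ℚ) + s + m + n - i - j - 1)))
      = (∏ i ∈ Finset.range m, ∏ j ∈ Finset.range n, ((n - j + (m - (i + 1)) : ℕ) : ℚ))
        / (∏ i ∈ Finset.range m, ∏ j ∈ Finset.range n,
            ((μ i + ν j + s + (n - j) + (m - (i + 1)) : ℕ) : ℚ)) := by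
    rw [← Finset.prod_div_distrib]
    apply Finset.prod_congr rfl
    intro i hi
    rw [← Finset.prod_div_distrib]
    apply Finset.prod_congr rfl
    intro j hj
    simp only [mem_range] at hi hj
    have e1 : ((n - j + (m - (i + 1)) : ℕ) : ℚ) = (m : ℚ) + n - i - j - 1 := by
      rw [Nat.cast_add, Nat.cast_sub hj.le, Nat.cast_sub (by omega : i + 1 ≤ m)]
      push_cast
      ring
    have e2 : ((μ i + ν j + s + (n - j) + (m - (i + 1)) : ℕ) : ℚ)
        = (μ i : ℚ) + (ν j : ℚ) + s + m + n - i - j - 1 := by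
      rw [Nat.cast_add, Nat.cast_add, Nat.cast_sub hj.le,
        Nat.cast_sub (by omega : i + 1 ≤ m)]
      push_cast
      ring
    rw [e1, e2]
  rw [hq, rect_hookProd m n, lambda_hookProd m n s μ ν hν hνlen]
  have hApos : (0 : ℚ) < (hookProd m μ : ℚ) := by exact_mod_cast hookProd_pos m μ
  have hBpos : (0 : ℚ) < (hookProd n (fun i => if i < n then ν i + s else 0) : ℚ) := by
    exact_mod_cast hookProd_pos n _
  have hPpos : (0 : ℚ) < (hookProd m (fun i => if i < m then μ i + s else 0) : ℚ) := by
    exact_mod_cast hookProd_pos m _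
  have hCpos : (0 : ℚ) < (hookProd n ν : ℚ) := by exact_mod_cast hookProd_pos n ν
  have hXpos : (0 : ℚ) < ∏ i ∈ Finset.range m, ∏ j ∈ Finset.range n,
      ((μ i + ν j + s + (n - j) + (m - (i + 1)) : ℕ) : ℚ) := by
    apply Finset.prod_pos
    intro i hi
    apply Finset.prod_pos
    intro j hj
    simp only [mem_range] at hj
    have : 0 < μ i + ν j + s + (n - j) + (m - (i + 1)) := by omega
    exact_mod_cast this
  push_cast at hXpos ⊢
  have hA' := ne_of_gt hApos
  have hB' := ne_of_gt hBpos
  have hP' := ne_of_gt hPpos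
  have hC' := ne_of_gt hCpos
  have hX' := ne_of_gt hXpos
  field_simp
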